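/- Let L be the Laplacian of a connected undirected weighted graph on N vertices and A₀ a diagonal matrix with nonnegative entries, not all zero on each block appropriately (as constructed from adjacency weights a_{ij}). Define H = I - h(L ⊗ I_N + A₀) with diagonal entries of L ⊗ I_N + A₀ bounded. If 0 < h < min_{i,j} 1/(Σ_l a_{il} + a_{ij}), then H is symmetric and all eigenvalues of H lie strictly within the unit circle, so ‖H‖ = ρ(H) < 1. -/

import Mathlib

/-- The weighted graph Laplacian `L` with `L i i = ∑ l, a i l` and
`L i j = -a i j` for `i ≠ j`. -/
noncomputable def Lap (N : ℕ) (a : Fin N → Fin N → ℝ) : Matrix (Fin N) (Fin N) ℝ :=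
  fun i j => if i = j then ∑ l, a i l else -(a i j)

/-- The matrix `H = I_{N²} - h (L ⊗ I_N + A₀)`, where
`A₀ = diag[a₁₁, …, a₁N, a₂₁, …, a_NN]`. -/
noncomputable def Hof (N : ℕ) (a : Fin N → Fin N → ℝ) (h : ℝ) :
    Matrix (Fin N × Fin N) (Fin N × Fin N) ℝ :=
  1 - h • (Matrix.kroneckerMap (· * ·) (Lap N a) (1 : Matrix (Fin N) (Fin N) ℝ)
      + Matrix.diagonal (fun p => a p.1 p.2))

section aux
variable {N : ℕ} {a : Fin N → Fin N → ℝ}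

lemma lap_entry (hdiag : ∀ i, a i i = 0) (i k : Fin N) :
    Lap N a i k = (if i = k then ∑ l, a i l else 0) - a i k := by
  unfold Lap
  by_cases hik : i = k
  · subst hik; simp [hdiag i]
  · simp [hik]

lemma lap_quad (hsym : ∀ i j, a i j = a j i) (hdiag : ∀ i, a i i = 0) (y : Fin N → ℝ) :
    ∑ i, ∑ k, Lap N a i k * y i * y k = 2⁻¹ * ∑ i, ∑ k, a i k * (y i - y k) ^ 2 := by
  have hrow : ∀ i, ∑ k, a i k * y i ^ 2 = (∑ l, a i l) * y i ^ 2 := by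
    intro i; rw [Finset.sum_mul]
  have hswap : ∑ i, ∑ k, a i k * y k ^ 2 = ∑ i, (∑ l, a i l) * y i ^ 2 := by
    rw [Finset.sum_comm]
    refine Finset.sum_congr rfl fun k _ => ?_
    rw [Finset.sum_mul]
    exact Finset.sum_congr rfl fun i _ => by rw [hsym i k]
  have hL : ∑ i, ∑ k, Lap N a i k * y i * y k
      = (∑ i, (∑ l, a i l) * y i ^ 2) - ∑ i, ∑ k, a i k * y i * y k := by
    rw [← Finset.sum_sub_distrib]
    refine Finset.sum_congr rfl fun i _ => ?_
    calc ∑ k, Lap N a i k * y i * y k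
        = ∑ k, ((if i = k then (∑ l, a i l) * y i ^ 2 else 0) - a i k * y i * y k) := by
          refine Finset.sum_congr rfl fun k _ => ?_
          rw [lap_entry hdiag]
          by_cases hik : i = k
          · subst hik; simp [hdiag i]; ring_nf
          · simp [hik]
      _ = (∑ k, if i = k then (∑ l, a i l) * y i ^ 2 else 0) - ∑ k, a i k * y i * y k :=
          Finset.sum_sub_distrib _ _
      _ = (∑ l, a i l) * y i ^ 2 - ∑ k, a i k * y i * y k := by
          rw [Finset.sum_ite_eq]; simp
  have e1 : ∑ i, ∑ k, a i k * (y i - y k) ^ 2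
      = (∑ i, ∑ k, a i k * y i ^ 2) + (∑ i, ∑ k, a i k * y k ^ 2)
        - 2 * ∑ i, ∑ k, a i k * y i * y k := by
    have expand : ∀ i k : Fin N, a i k * (y i - y k) ^ 2
        = (a i k * y i ^ 2 + a i k * y k ^ 2) - 2 * (a i k * y i * y k) := by intros; ring
    simp_rw [expand, Finset.sum_sub_distrib, Finset.sum_add_distrib, ← Finset.mul_sum]
  rw [hL, e1, hswap]
  simp_rw [hrow]
  ring

end aux

section aux2
variable {N : ℕ} {a : Fin N → Fin N → ℝ}

noncomputable def Mmat (N : ℕ) (a : Fin N → Fin N → ℝ) :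
    Matrix (Fin N × Fin N) (Fin N × Fin N) ℝ :=
  Matrix.kroneckerMap (· * ·) (Lap N a) (1 : Matrix (Fin N) (Fin N) ℝ)
    + Matrix.diagonal (fun p => a p.1 p.2)

lemma Mmat_mulVec (x : Fin N × Fin N → ℝ) (p : Fin N × Fin N) :
    (Mmat N a).mulVec x p = (∑ k, Lap N a p.1 k * x (k, p.2)) + a p.1 p.2 * x p := by
  rw [Mmat, Matrix.add_mulVec, Pi.add_apply]
  congr 1
  · simp only [Matrix.mulVec, dotProduct]
    rw [Fintype.sum_prod_type]
    refine Finset.sum_congr rfl fun k _ => ?_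
    simp only [Matrix.kroneckerMap_apply, Matrix.one_apply, mul_ite, mul_one, mul_zero,
      ite_mul, zero_mul, mul_assoc]
    rw [Finset.sum_ite_eq Finset.univ p.2 (fun l => Lap N a p.1 k * x (k, l))]
    simp
  · simp [Matrix.mulVec_diagonal]

open Matrix in
lemma quad_eq (hsym : ∀ i j, a i j = a j i) (hdiag : ∀ i, a i i = 0) (x : Fin N × Fin N → ℝ) :
    x ⬝ᵥ (Mmat N a).mulVec x
      = 2⁻¹ * (∑ j, ∑ i, ∑ k, a i k * (x (i, j) - x (k, j)) ^ 2)
        + ∑ p, a p.1 p.2 * x p ^ 2 := by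
  unfold dotProduct
  simp_rw [Mmat_mulVec, mul_add]
  rw [Finset.sum_add_distrib]
  congr 1
  · rw [Fintype.sum_prod_type]
    have : ∀ i j : Fin N, x (i, j) * ∑ k, Lap N a i k * x (k, j)
        = ∑ k, Lap N a i k * x (i, j) * x (k, j) := by
      intro i j; rw [Finset.mul_sum]; exact Finset.sum_congr rfl fun k _ => by ring
    calc ∑ i, ∑ j, x (i, j) * ∑ k, Lap N a (i, j).1 k * x (k, (i, j).2)
        = ∑ j, ∑ i, ∑ k, Lap N a i k * x (i, j) * x (k, j) := by
          rw [Finset.sum_comm]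
          exact Finset.sum_congr rfl fun j _ => Finset.sum_congr rfl fun i _ => this i j
      _ = ∑ j, 2⁻¹ * ∑ i, ∑ k, a i k * (x (i, j) - x (k, j)) ^ 2 := by
          exact Finset.sum_congr rfl fun j _ => lap_quad hsym hdiag (fun i => x (i, j))
      _ = 2⁻¹ * ∑ j, ∑ i, ∑ k, a i k * (x (i, j) - x (k, j)) ^ 2 := by
          rw [Finset.mul_sum]
  · exact Finset.sum_congr rfl fun p _ => by ring

lemma path_const (hconn : ∀ i j : Fin N, i ≠ j → ∃ (m : ℕ) (p : Fin (m + 1) → Fin N),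
      p 0 = i ∧ p (Fin.last m) = j ∧
      ∀ q : Fin m, 0 < a (p q.castSucc) (p q.succ))
    (f : Fin N → ℝ) (hstep : ∀ i k, 0 < a i k → f i = f k) :
    ∀ i k : Fin N, f i = f k := by
  intro i k
  by_cases hik : i = k
  · rw [hik]
  · obtain ⟨m, p, hp0, hpl, hpos⟩ := hconn i k hik
    have : ∀ q : Fin (m + 1), f (p 0) = f (p q) := by
      intro q
      induction q using Fin.induction with
      | zero => rfl
      | succ q ih => rw [ih, hstep _ _ (hpos q)]
    rw [← hp0, ← hpl, this]

open Matrix in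
lemma quad_pos (hsym : ∀ i j, a i j = a j i) (hnn : ∀ i j, 0 ≤ a i j)
    (hdiag : ∀ i, a i i = 0) (hN2 : 1 < N)
    (hconn : ∀ i j : Fin N, i ≠ j → ∃ (m : ℕ) (p : Fin (m + 1) → Fin N),
      p 0 = i ∧ p (Fin.last m) = j ∧
      ∀ q : Fin m, 0 < a (p q.castSucc) (p q.succ))
    (x : Fin N × Fin N → ℝ) (hx : x ≠ 0) :
    0 < x ⬝ᵥ (Mmat N a).mulVec x := by
  rw [quad_eq hsym hdiag]
  set T1 := ∑ j, ∑ i, ∑ k, a i k * (x (i, j) - x (k, j)) ^ 2 with hT1def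
  set T2 := ∑ p : Fin N × Fin N, a p.1 p.2 * x p ^ 2 with hT2def
  have hT1nn : 0 ≤ T1 :=
    Finset.sum_nonneg fun j _ => Finset.sum_nonneg fun i _ => Finset.sum_nonneg fun k _ =>
      mul_nonneg (hnn i k) (sq_nonneg _)
  have hT2nn : 0 ≤ T2 :=
    Finset.sum_nonneg fun p _ => mul_nonneg (hnn p.1 p.2) (sq_nonneg _)
  have hQnn : (0:ℝ) ≤ 2⁻¹ * T1 + T2 :=
    add_nonneg (mul_nonneg (by norm_num) hT1nn) hT2nn
  rcases lt_or_eq_of_le hQnn with hlt | heq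
  · exact hlt
  exfalso
  have hT1 : T1 = 0 := by linarith
  have hT2 : T2 = 0 := by linarith
  -- each term of T1 is zero
  have hterm : ∀ j i k : Fin N, a i k * (x (i, j) - x (k, j)) ^ 2 = 0 := by
    intro j i k
    have h1 := (Finset.sum_eq_zero_iff_of_nonneg (fun j _ =>
      Finset.sum_nonneg fun i _ => Finset.sum_nonneg fun k _ =>
        mul_nonneg (hnn i k) (sq_nonneg (x (i, j) - x (k, j))))).mp hT1 j (Finset.mem_univ j)
    have h2 := (Finset.sum_eq_zero_iff_of_nonneg (fun i _ =>
      Finset.sum_nonneg fun k _ =>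
        mul_nonneg (hnn i k) (sq_nonneg (x (i, j) - x (k, j))))).mp h1 i (Finset.mem_univ i)
    exact (Finset.sum_eq_zero_iff_of_nonneg (fun k _ =>
      mul_nonneg (hnn i k) (sq_nonneg (x (i, j) - x (k, j))))).mp h2 k (Finset.mem_univ k)
  have hterm2 : ∀ p : Fin N × Fin N, a p.1 p.2 * x p ^ 2 = 0 := by
    intro p
    exact (Finset.sum_eq_zero_iff_of_nonneg (fun p _ =>
      mul_nonneg (hnn p.1 p.2) (sq_nonneg (x p)))).mp hT2 p (Finset.mem_univ p)
  -- for each column j, x (·, j) is constant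
  have hconst : ∀ j i k : Fin N, x (i, j) = x (k, j) := by
    intro j
    refine path_const hconn (fun i => x (i, j)) ?_
    intro i k hik
    have := hterm j i k
    have hsq : (x (i, j) - x (k, j)) ^ 2 = 0 := by
      rcases mul_eq_zero.mp this with h | h
      · exact absurd h (ne_of_gt hik)
      · exact h
    have := sq_eq_zero_iff.mp hsq
    linarith
  -- each column has a positive entry
  have hcol : ∀ j : Fin N, ∃ k, 0 < a k j := by
    intro j
    have hj' : ∃ j' : Fin N, j' ≠ j :=
      Fintype.exists_ne_of_one_lt_card (by simpa using hN2) j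
    obtain ⟨j', hj'⟩ := hj'
    obtain ⟨m, p, hp0, hpl, hpos⟩ := hconn j j' (Ne.symm hj')
    rcases Nat.eq_zero_or_pos m with hm | hm
    · exfalso; subst hm
      exact hj' (by rw [← hpl, ← hp0]; rfl)
    · set q : Fin m := ⟨0, hm⟩ with hq
      refine ⟨p q.succ, ?_⟩
      have : p q.castSucc = j := by
        rw [← hp0]; congr 1
      rw [hsym]
      rw [← this]
      exact hpos q
  -- conclude x = 0
  apply hx
  funext p
  obtain ⟨k, hk⟩ := hcol p.2
  have h0 : x (k, p.2) = 0 := by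
    have := hterm2 (k, p.2)
    have hsq : x (k, p.2) ^ 2 = 0 := by
      rcases mul_eq_zero.mp this with h | h
      · exact absurd h (ne_of_gt hk)
      · exact h
    exact sq_eq_zero_iff.mp hsq
  have := hconst p.2 p.1 k
  show x p = 0
  rw [show p = (p.1, p.2) from rfl, this, h0]

open Matrix in
lemma quad_lt (hsym : ∀ i j, a i j = a j i) (hnn : ∀ i j, 0 ≤ a i j)
    (hdiag' : ∀ i, a i i = 0) {h : ℝ} (hh0 : 0 < h)
    (hh : ∀ i j : Fin N, h < 1 / ((∑ l, a i l) + a i j))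
    (x : Fin N × Fin N → ℝ) (hx : x ≠ 0) :
    h * (x ⬝ᵥ (Mmat N a).mulVec x) < 2 * ∑ p, x p ^ 2 := by
  have hSnn : ∀ i, 0 ≤ ∑ l, a i l := fun i => Finset.sum_nonneg fun l _ => hnn i l
  -- coefficient bound
  have hcoeff : ∀ i j : Fin N, h * (2 * (∑ l, a i l) + a i j) < 2 := by
    intro i j
    rcases eq_or_lt_of_le (add_nonneg (hSnn i) (hnn i j)) with h0 | hpos
    · have h1 : (∑ l, a i l) = 0 := by linarith [hSnn i, hnn i j]
      have h2 : a i j = 0 := by linarith [hSnn i, hnn i j]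
      rw [h1, h2]; simpa using hh0
    · have := (lt_div_iff₀ hpos).mp (hh i j)
      nlinarith [mul_nonneg hh0.le (hnn i j)]
  -- upper bound on the quadratic form
  have Qle : x ⬝ᵥ (Mmat N a).mulVec x
      ≤ ∑ p : Fin N × Fin N, (2 * (∑ l, a p.1 l) + a p.1 p.2) * x p ^ 2 := by
    rw [quad_eq hsym hdiag']
    have e2 : ∀ j, ∑ i, ∑ k, a i k * (x (i, j) - x (k, j)) ^ 2
        ≤ ∑ i, 4 * ((∑ l, a i l) * x (i, j) ^ 2) := by
      intro j
      have step1 : ∑ i, ∑ k, a i k * (x (i, j) - x (k, j)) ^ 2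
          ≤ ∑ i, ∑ k, (2 * (a i k * x (i, j) ^ 2) + 2 * (a i k * x (k, j) ^ 2)) := by
        refine Finset.sum_le_sum fun i _ => Finset.sum_le_sum fun k _ => ?_
        nlinarith [mul_nonneg (hnn i k) (sq_nonneg (x (i, j) + x (k, j)))]
      have step2 : ∑ i, ∑ k, (2 * (a i k * x (i, j) ^ 2) + 2 * (a i k * x (k, j) ^ 2))
          = ∑ i, 4 * ((∑ l, a i l) * x (i, j) ^ 2) := by
        simp_rw [Finset.sum_add_distrib]
        have eA : ∑ i, ∑ k, 2 * (a i k * x (i, j) ^ 2)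
            = ∑ i, 2 * ((∑ l, a i l) * x (i, j) ^ 2) := by
          refine Finset.sum_congr rfl fun i _ => ?_
          rw [← Finset.mul_sum, ← Finset.sum_mul]
        have eB : ∑ i, ∑ k, 2 * (a i k * x (k, j) ^ 2)
            = ∑ i, 2 * ((∑ l, a i l) * x (i, j) ^ 2) := by
          rw [Finset.sum_comm]
          refine Finset.sum_congr rfl fun k _ => ?_
          rw [← Finset.mul_sum, ← Finset.sum_mul]
          congr 2
          exact Finset.sum_congr rfl fun i _ => hsym i k
        rw [eA, eB, ← Finset.sum_add_distrib]
        exact Finset.sum_congr rfl fun i _ => by ring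
      calc ∑ i, ∑ k, a i k * (x (i, j) - x (k, j)) ^ 2 ≤ _ := step1
        _ = _ := step2
    have e3 : 2⁻¹ * (∑ j, ∑ i, ∑ k, a i k * (x (i, j) - x (k, j)) ^ 2)
        ≤ ∑ j, ∑ i, 2 * ((∑ l, a i l) * x (i, j) ^ 2) := by
      have := Finset.sum_le_sum fun j (_ : j ∈ Finset.univ) => e2 j
      have h4 : ∑ j, ∑ i, 4 * ((∑ l, a i l) * x (i, j) ^ 2)
          = 2 * ∑ j, ∑ i, 2 * ((∑ l, a i l) * x (i, j) ^ 2) := by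
        rw [Finset.mul_sum]
        refine Finset.sum_congr rfl fun j _ => ?_
        rw [Finset.mul_sum]
        exact Finset.sum_congr rfl fun i _ => by ring
      rw [h4] at this
      linarith
    have e4 : ∑ j, ∑ i, 2 * ((∑ l, a i l) * x (i, j) ^ 2)
        = ∑ p : Fin N × Fin N, 2 * ((∑ l, a p.1 l) * x p ^ 2) := by
      rw [Fintype.sum_prod_type, Finset.sum_comm]
    have e5 : ∑ p : Fin N × Fin N, 2 * ((∑ l, a p.1 l) * x p ^ 2)
          + ∑ p : Fin N × Fin N, a p.1 p.2 * x p ^ 2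
        = ∑ p : Fin N × Fin N, (2 * (∑ l, a p.1 l) + a p.1 p.2) * x p ^ 2 := by
      rw [← Finset.sum_add_distrib]
      exact Finset.sum_congr rfl fun p _ => by ring
    calc 2⁻¹ * (∑ j, ∑ i, ∑ k, a i k * (x (i, j) - x (k, j)) ^ 2)
          + ∑ p : Fin N × Fin N, a p.1 p.2 * x p ^ 2
        ≤ ∑ p : Fin N × Fin N, 2 * ((∑ l, a p.1 l) * x p ^ 2)
          + ∑ p : Fin N × Fin N, a p.1 p.2 * x p ^ 2 := by
          rw [← e4]; linarith [e3]
      _ = _ := e5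
  obtain ⟨p₀, hp₀⟩ := Function.ne_iff.mp hx
  calc h * (x ⬝ᵥ (Mmat N a).mulVec x)
      ≤ h * ∑ p : Fin N × Fin N, (2 * (∑ l, a p.1 l) + a p.1 p.2) * x p ^ 2 :=
        mul_le_mul_of_nonneg_left Qle hh0.le
    _ = ∑ p : Fin N × Fin N, h * ((2 * (∑ l, a p.1 l) + a p.1 p.2) * x p ^ 2) :=
        Finset.mul_sum _ _ _
    _ < ∑ p : Fin N × Fin N, 2 * x p ^ 2 := by
        refine Finset.sum_lt_sum (fun p _ => ?_) ⟨p₀, Finset.mem_univ p₀, ?_⟩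
        · have := hcoeff p.1 p.2
          nlinarith [sq_nonneg (x p)]
        · have hne : x p₀ ≠ 0 := by simpa using hp₀
          have hx2 : 0 < x p₀ ^ 2 := by positivity
          have := hcoeff p₀.1 p₀.2
          nlinarith
    _ = 2 * ∑ p, x p ^ 2 := (Finset.mul_sum _ _ _).symm

lemma Hof_eq (N : ℕ) (a : Fin N → Fin N → ℝ) (h : ℝ) :
    Hof N a h = 1 - h • Mmat N a := rfl

open Matrix in
lemma eig_bound (hsym : ∀ i j, a i j = a j i) (hnn : ∀ i j, 0 ≤ a i j)
    (hdiag : ∀ i, a i i = 0) (hN2 : 1 < N)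
    (hconn : ∀ i j : Fin N, i ≠ j → ∃ (m : ℕ) (p : Fin (m + 1) → Fin N),
      p 0 = i ∧ p (Fin.last m) = j ∧
      ∀ q : Fin m, 0 < a (p q.castSucc) (p q.succ))
    {h : ℝ} (hh0 : 0 < h)
    (hh : ∀ i j : Fin N, h < 1 / ((∑ l, a i l) + a i j))
    {μ : ℝ} {v : Fin N × Fin N → ℝ} (hv : v ≠ 0)
    (heq : (Hof N a h).mulVec v = μ • v) : -1 < μ ∧ μ < 1 := by
  have hQpos := quad_pos hsym hnn hdiag hN2 hconn v hv
  have hQlt := quad_lt hsym hnn hdiag hh0 hh v hv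
  have hdot : v ⬝ᵥ (Hof N a h).mulVec v
      = v ⬝ᵥ v - h * (v ⬝ᵥ (Mmat N a).mulVec v) := by
    rw [Hof_eq, Matrix.sub_mulVec, Matrix.one_mulVec, Matrix.smul_mulVec,
      dotProduct_sub, dotProduct_smul, smul_eq_mul]
  have hvv : v ⬝ᵥ v = ∑ p, v p ^ 2 := by
    unfold dotProduct
    exact Finset.sum_congr rfl fun p _ => (sq (v p)).symm
  have hnsq : 0 < ∑ p, v p ^ 2 := by
    obtain ⟨p₀, hp₀⟩ := Function.ne_iff.mp hv
    refine Finset.sum_pos' (fun p _ => sq_nonneg _) ⟨p₀, Finset.mem_univ _, ?_⟩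
    have hne : v p₀ ≠ 0 := by simpa using hp₀
    positivity
  have hmain : (∑ p, v p ^ 2) - h * (v ⬝ᵥ (Mmat N a).mulVec v) = μ * ∑ p, v p ^ 2 := by
    have := congrArg (fun w => v ⬝ᵥ w) heq
    rw [hdot, hvv] at this
    rw [this, dotProduct_smul, smul_eq_mul, hvv]
  constructor
  · nlinarith
  · nlinarith

lemma lap_symm (hsym : ∀ i j, a i j = a j i) (i k : Fin N) :
    Lap N a i k = Lap N a k i := by
  unfold Lap
  by_cases hik : i = k
  · subst hik; rfl
  · simp [hik, Ne.symm hik, hsym i k]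

open Matrix in
lemma Hof_isSymm (hsym : ∀ i j, a i j = a j i) (h : ℝ) : (Hof N a h).IsSymm := by
  show (Hof N a h)ᵀ = Hof N a h
  ext p q
  simp only [Matrix.transpose_apply, Hof, Matrix.sub_apply, Matrix.one_apply,
    Matrix.smul_apply, Matrix.add_apply, Matrix.kroneckerMap_apply,
    Matrix.diagonal_apply, smul_eq_mul]
  have e1 : (if q = p then (1:ℝ) else 0) = if p = q then 1 else 0 := by
    simp only [eq_comm]
  have e2 : (if q.2 = p.2 then (1:ℝ) else 0) = if p.2 = q.2 then 1 else 0 := by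
    simp only [eq_comm]
  have e3 : (if q = p then a q.1 q.2 else 0) = if p = q then a p.1 p.2 else 0 := by
    by_cases hpq : p = q
    · subst hpq; simp
    · simp [hpq, Ne.symm hpq]
  rw [e1, e2, e3, lap_symm hsym q.1 p.1]

end aux2

/-- If the graph is undirected (symmetric nonnegative weights, zero diagonal) and
connected, and `0 < h < min_{i,j} 1/(∑_l a_{il} + a_{ij})`, then
`H = I - h(L ⊗ I_N + A₀)` is symmetric, all its eigenvalues lie strictly
inside the unit circle, and `‖H‖ = ρ(H) < 1`. -/
theorem stmt6 (N : ℕ) (hN : 0 < N) (a : Fin N → Fin N → ℝ)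
    (hsym : ∀ i j, a i j = a j i) (hnn : ∀ i j, 0 ≤ a i j)
    (hdiag : ∀ i, a i i = 0)
    (hconn : ∀ i j : Fin N, i ≠ j → ∃ (m : ℕ) (p : Fin (m + 1) → Fin N),
      p 0 = i ∧ p (Fin.last m) = j ∧
      ∀ q : Fin m, 0 < a (p q.castSucc) (p q.succ))
    (h : ℝ) (hh0 : 0 < h)
    (hh : ∀ i j : Fin N, h < 1 / ((∑ l, a i l) + a i j)) :
    (Hof N a h).IsSymm ∧
    (∀ μ ∈ spectrum ℝ (Hof N a h), |μ| < 1) ∧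
    ‖Matrix.toEuclideanCLM (𝕜 := ℝ) (Hof N a h)‖ < 1 := by
  have hN2 : 1 < N := by
    by_contra hcon
    push_neg at hcon
    interval_cases N
    have hzero : (∑ l, a 0 l) = 0 := by
      rw [Fin.sum_univ_one]; exact hdiag 0
    have := hh 0 0
    rw [hzero, hdiag 0] at this
    norm_num at this
    linarith
  refine ⟨Hof_isSymm hsym h, ?_, ?_⟩
  · intro μ hμ
    rw [spectrum.mem_iff] at hμ
    have hdet : (algebraMap ℝ (Matrix (Fin N × Fin N) (Fin N × Fin N) ℝ) μ
        - Hof N a h).det = 0 := by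
      by_contra hd
      exact hμ ((Matrix.isUnit_iff_isUnit_det _).mpr (isUnit_iff_ne_zero.mpr hd))
    obtain ⟨v, hv0, hveq⟩ := (Matrix.exists_mulVec_eq_zero_iff).mpr hdet
    have heqv : (Hof N a h).mulVec v = μ • v := by
      rw [Algebra.algebraMap_eq_smul_one, Matrix.sub_mulVec, Matrix.smul_mulVec,
        Matrix.one_mulVec] at hveq
      exact (sub_eq_zero.mp hveq).symm
    obtain ⟨hl, hr⟩ := eig_bound hsym hnn hdiag hN2 hconn hh0 hh hv0 heqv
    exact abs_lt.mpr ⟨hl, hr⟩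
  · have hH : (Hof N a h).IsHermitian := by
      rw [Matrix.IsHermitian, Matrix.conjTranspose_eq_transpose_of_trivial]
      exact Hof_isSymm hsym h
    have hTsym := Matrix.isHermitian_iff_isSymmetric.mp hH
    have hn : Module.finrank ℝ (EuclideanSpace ℝ (Fin N × Fin N))
        = Fintype.card (Fin N × Fin N) := finrank_euclideanSpace
    have hnpos : 0 < Fintype.card (Fin N × Fin N) := by
      simp only [Fintype.card_prod, Fintype.card_fin]
      exact Nat.mul_pos hN hN
    haveI hne : Nonempty (Fin (Fintype.card (Fin N × Fin N))) := Fin.pos_iff_nonempty.mp hnpos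
    set e := hTsym.eigenvectorBasis hn with he
    set μs := hTsym.eigenvalues hn with hμs
    have heig : ∀ i, |μs i| < 1 := by
      intro i
      have hv := hTsym.hasEigenvector_eigenvectorBasis hn i
      have happ : Matrix.toEuclideanLin (Hof N a h) (e i) = (μs i) • e i :=
        hTsym.apply_eigenvectorBasis hn i
      have hmv : (Hof N a h).mulVec (WithLp.equiv 2 _ (e i)) = μs i • WithLp.equiv 2 _ (e i) := by
        calc (Hof N a h).mulVec (WithLp.equiv 2 _ (e i))
            = WithLp.equiv 2 _ (Matrix.toEuclideanLin (Hof N a h) (e i)) :=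
              (Matrix.ofLp_toEuclideanLin_apply (Hof N a h) (e i)).symm
          _ = WithLp.equiv 2 _ ((μs i) • e i) := by rw [happ]
          _ = μs i • WithLp.equiv 2 _ (e i) := rfl
      have hw0 : (WithLp.equiv 2 _ (e i) : Fin N × Fin N → ℝ) ≠ 0 := by
        intro hw0
        apply hv.2
        have := congrArg (WithLp.equiv 2 ((Fin N × Fin N) → ℝ)).symm hw0
        simpa using this
      obtain ⟨hl, hr⟩ := eig_bound hsym hnn hdiag hN2 hconn hh0 hh hw0 hmv
      exact abs_lt.mpr ⟨hl, hr⟩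
    set c := Finset.univ.sup' Finset.univ_nonempty (fun i => |μs i|) with hc
    have hc1 : c < 1 := (Finset.sup'_lt_iff _).mpr fun i _ => heig i
    have hcle : ∀ i, |μs i| ≤ c := fun i => Finset.le_sup' (fun j => |μs j|) (Finset.mem_univ i)
    have hc0 : 0 ≤ c := le_trans (abs_nonneg _) (hcle (Classical.arbitrary _))
    have hnorm : ‖Matrix.toEuclideanCLM (𝕜 := ℝ) (Hof N a h)‖ ≤ c := by
      refine ContinuousLinearMap.opNorm_le_bound _ hc0 fun v => ?_
      have hTv : Matrix.toEuclideanCLM (𝕜 := ℝ) (Hof N a h) v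
          = Matrix.toEuclideanLin (Hof N a h) v := rfl
      rw [hTv]
      have h1 : ∀ i, e.repr (Matrix.toEuclideanLin (Hof N a h) v) i = μs i * e.repr v i :=
        fun i => hTsym.eigenvectorBasis_apply_self_apply hn v i
      calc ‖Matrix.toEuclideanLin (Hof N a h) v‖
          = ‖e.repr (Matrix.toEuclideanLin (Hof N a h) v)‖ := (e.repr.norm_map _).symm
        _ ≤ c * ‖e.repr v‖ := by
            rw [EuclideanSpace.norm_eq, EuclideanSpace.norm_eq]
            have hle : ∀ i, ‖e.repr (Matrix.toEuclideanLin (Hof N a h) v) i‖ ^ 2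
                ≤ c ^ 2 * ‖e.repr v i‖ ^ 2 := by
              intro i
              rw [h1 i, Real.norm_eq_abs, Real.norm_eq_abs, abs_mul]
              rw [mul_pow]
              exact mul_le_mul_of_nonneg_right
                (pow_le_pow_left₀ (abs_nonneg _) (hcle i) 2) (sq_nonneg _)
            calc Real.sqrt (∑ i, ‖e.repr (Matrix.toEuclideanLin (Hof N a h) v) i‖ ^ 2)
                ≤ Real.sqrt (∑ i, c ^ 2 * ‖e.repr v i‖ ^ 2) :=
                  Real.sqrt_le_sqrt (Finset.sum_le_sum fun i _ => hle i)
              _ = Real.sqrt (c ^ 2 * ∑ i, ‖e.repr v i‖ ^ 2) := by rw [Finset.mul_sum]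
              _ = c * Real.sqrt (∑ i, ‖e.repr v i‖ ^ 2) := by
                  rw [Real.sqrt_mul (sq_nonneg c), Real.sqrt_sq hc0]
        _ = c * ‖v‖ := by rw [e.repr.norm_map]
    linarith
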